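/- Let A be a set of n integers and let 0 ≤ k < n. Then (k+1)·|S_{k+1}| ≤ n·|S_k|. -/

import Mathlib

/-- Let `A` be a set of `n` integers and let `0 ≤ k < n`. Then `(k+1)·|S_{k+1}| ≤ n·|S_k|`,
where `S_k` is the set of sums of `k`-element subsets of `A`. -/
theorem stmt_3 (A : Finset ℤ) (n k : ℕ) (hn : A.card = n) (hk : k < n) :
    (k + 1) * ((A.powersetCard (k + 1)).image (fun B => B.sum id)).card ≤
      n * ((A.powersetCard k).image (fun B => B.sum id)).card := by
  classical
  set Sk := (A.powersetCard k).image (fun B => B.sum id) with hSk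
  set Sk1 := (A.powersetCard (k + 1)).image (fun B => B.sum id) with hSk1
  have key : Sk1.card * (k + 1) ≤ Sk.card * n := by
    apply Finset.card_mul_le_card_mul (fun x y => x - y ∈ A)
    · intro a ha
      rw [hSk1] at ha
      simp only [Finset.mem_image, Finset.mem_powersetCard] at ha
      obtain ⟨B, ⟨hBA, hBcard⟩, hBsum⟩ := ha
      have hsub : B.image (fun b => a - b) ⊆
          Finset.bipartiteAbove (fun x y => x - y ∈ A) Sk a := by
        intro y hy
        simp only [Finset.mem_image] at hy
        obtain ⟨b, hb, rfl⟩ := hy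
        rw [Finset.mem_bipartiteAbove]
        constructor
        · rw [hSk]
          refine Finset.mem_image.mpr ⟨B.erase b, ?_, ?_⟩
          · rw [Finset.mem_powersetCard]
            exact ⟨(Finset.erase_subset _ _).trans hBA,
              by rw [Finset.card_erase_of_mem hb, hBcard]; rfl⟩
          · rw [Finset.sum_erase_eq_sub hb, hBsum]; rfl
        · simpa using hBA hb
      calc k + 1 = B.card := hBcard.symm
        _ = (B.image (fun b => a - b)).card := by
            rw [Finset.card_image_of_injective _ (sub_right_injective)]
        _ ≤ _ := Finset.card_le_card hsub
    · intro b hb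
      rw [← hn]
      apply Finset.card_le_card_of_injOn (fun a => a - b)
      · intro a ha
        rw [Finset.mem_coe, Finset.mem_bipartiteBelow] at ha
        exact ha.2
      · intro x _ y _ hxy
        have := sub_left_injective hxy
        exact this
  calc (k + 1) * Sk1.card = Sk1.card * (k + 1) := mul_comm _ _
    _ ≤ Sk.card * n := key
    _ = n * Sk.card := mul_comm _ _
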